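/- Let r be a positive natural number, let w ∈ ℝ^r with w ≠ 0, let π ∈ (0,1), and let p₁, p₂ > 0. Define f : ℝ^r → ℝ by f(v) = π · p₁ · log(1 + exp(−(1−π)⟨v, w⟩)) + (1−π) · p₂ · log(1 + exp(π⟨v, w⟩)), where ⟨·,·⟩ is the Euclidean inner product. If v̂ ∈ ℝ^r is a critical point of f (i.e., the Fréchet derivative of f at v̂ is zero; in particular if v̂ minimizes f), then log(p₁/p₂) = ⟨v̂, w⟩ + log((1 + exp(−(1−π)⟨v̂, w⟩))/(1 + exp(π⟨v̂, w⟩))). -/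

import Mathlib

open scoped RealInnerProductSpace

theorem stmt_5 (r : ℕ) (hr : 0 < r)
    (w : EuclideanSpace ℝ (Fin r)) (hw : w ≠ 0)
    (π : ℝ) (hπ₀ : 0 < π) (hπ₁ : π < 1)
    (p₁ p₂ : ℝ) (hp₁ : 0 < p₁) (hp₂ : 0 < p₂)
    (f : EuclideanSpace ℝ (Fin r) → ℝ)
    (hf : f = fun v => π * p₁ * Real.log (1 + Real.exp (-((1 - π) * ⟪v, w⟫))) +
                       (1 - π) * p₂ * Real.log (1 + Real.exp (π * ⟪v, w⟫)))
    (vhat : EuclideanSpace ℝ (Fin r))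
    (hcrit : fderiv ℝ f vhat = 0) :
    Real.log (p₁ / p₂) =
      ⟪vhat, w⟫ + Real.log ((1 + Real.exp (-((1 - π) * ⟪vhat, w⟫))) /
                            (1 + Real.exp (π * ⟪vhat, w⟫))) := by
  classical
  set s : ℝ := ⟪vhat, w⟫ with hs
  set a : ℝ := Real.exp (-((1 - π) * s)) with hadef
  set b : ℝ := Real.exp (π * s) with hbdef
  have ha : (0:ℝ) < a := Real.exp_pos _
  have hb : (0:ℝ) < b := Real.exp_pos _
  have h1a : (0:ℝ) < 1 + a := by linarith
  have h1b : (0:ℝ) < 1 + b := by linarith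
  -- the scalar function g
  set g : ℝ → ℝ := fun t => π * p₁ * Real.log (1 + Real.exp (-((1 - π) * t))) +
      (1 - π) * p₂ * Real.log (1 + Real.exp (π * t)) with hg
  set D : ℝ := π * p₁ * ((Real.exp (-((1 - π) * s)) * (-(1 - π))) / (1 + Real.exp (-((1 - π) * s)))) +
      (1 - π) * p₂ * ((Real.exp (π * s) * π) / (1 + Real.exp (π * s))) with hD
  have hgd : HasDerivAt g D s := by
    have h1 : HasDerivAt (fun t : ℝ => -((1 - π) * t)) (-(1 - π)) s := by
      simpa [Pi.neg_def] using ((hasDerivAt_id s).const_mul (1 - π)).neg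
    have h2 : HasDerivAt (fun t : ℝ => π * t) π s := by
      simpa using (hasDerivAt_id s).const_mul π
    have e1 : HasDerivAt (fun t : ℝ => 1 + Real.exp (-((1 - π) * t)))
        (Real.exp (-((1 - π) * s)) * (-(1 - π))) s := (h1.exp).const_add 1
    have e2 : HasDerivAt (fun t : ℝ => 1 + Real.exp (π * t))
        (Real.exp (π * s) * π) s := (h2.exp).const_add 1
    have l1 := (e1.log h1a.ne')
    have l2 := (e2.log h1b.ne')
    exact (l1.const_mul (π * p₁)).add (l2.const_mul ((1 - π) * p₂))
  -- the linear map v ↦ ⟪v, w⟫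
  set T : EuclideanSpace ℝ (Fin r) →L[ℝ] ℝ := innerSL ℝ w with hT
  have hTv : ∀ v, T v = ⟪v, w⟫ := fun v => by simp [hT, real_inner_comm, mul_comm]
  have hfc : f = g ∘ (fun v => T v) := by
    funext v; simp [hf, hg, hTv]
  have hfder : HasFDerivAt f (D • (T : EuclideanSpace ℝ (Fin r) →L[ℝ] ℝ)) vhat := by
    rw [hfc]
    have hTd : HasFDerivAt (fun v => T v) T vhat := T.hasFDerivAt
    have : HasDerivAt g D (T vhat) := by rwa [hTv vhat, ← hs]
    exact this.comp_hasFDerivAt vhat hTd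
  have hD0 : D = 0 := by
    have h0 : D • T = 0 := by rw [← hfder.fderiv, hcrit]
    have hw2 : T w = ⟪w, w⟫ := hTv w
    have hww : (0:ℝ) < ⟪w, w⟫ := by
      rw [real_inner_self_eq_norm_sq]
      have : ‖w‖ ≠ 0 := norm_ne_zero_iff.2 hw
      positivity
    have := congrArg (fun (L : EuclideanSpace ℝ (Fin r) →L[ℝ] ℝ) => L w) h0
    simp only [ContinuousLinearMap.smul_apply, ContinuousLinearMap.zero_apply,
      smul_eq_mul, hw2] at this
    rcases mul_eq_zero.1 this with h | h
    · exact h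
    · exact absurd h hww.ne'
  -- algebra
  have hπ1 : (0:ℝ) < 1 - π := by linarith
  have key : p₁ * a * (1 + b) = p₂ * b * (1 + a) := by
    have hDeq : D = π * (1 - π) * (p₂ * b / (1 + b) - p₁ * a / (1 + a)) := by
      rw [hD, ← hadef, ← hbdef]; ring
    have h0 : p₂ * b / (1 + b) - p₁ * a / (1 + a) = 0 := by
      have hne : π * (1 - π) ≠ 0 := (mul_pos hπ₀ hπ1).ne'
      have := hDeq ▸ hD0
      exact (mul_eq_zero.1 this).resolve_left hne
    have h1 : p₁ * a / (1 + a) = p₂ * b / (1 + b) := by linarith [h0]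
    exact (div_eq_div_iff h1a.ne' h1b.ne').1 h1
  have hlog : Real.log p₁ + Real.log a + Real.log (1 + b) =
      Real.log p₂ + Real.log b + Real.log (1 + a) := by
    have := congrArg Real.log key
    rw [Real.log_mul (mul_pos hp₁ ha).ne' h1b.ne', Real.log_mul hp₁.ne' ha.ne',
        Real.log_mul (mul_pos hp₂ hb).ne' h1a.ne', Real.log_mul hp₂.ne' hb.ne'] at this
    linarith [this]
  have hla : Real.log a = -((1 - π) * s) := Real.log_exp _
  have hlb : Real.log b = π * s := Real.log_exp _
  rw [Real.log_div hp₁.ne' hp₂.ne', Real.log_div h1a.ne' h1b.ne']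
  rw [hla, hlb] at hlog
  linarith [hlog]
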